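/- Let F be a field of characteristic 0 and let G be a connected finite simple graph of order p and size q = p + 1 such that every pair of two distinct edges of G is the support of u² for some u : V(G) → F, but G is not edge-square over F. Then every vertex of G has degree at least 2, G contains no cycle of even length, and G contains two cycles of odd length having no edge in common. -/

import Mathlib

/-- `edgeVal u e` is the sum of the values of `u` at the two endpoints of `e`,
written `λ_e(u)` in the paper. -/
def edgeVal {V F : Type*} [Field F] (u : V → F) : Sym2 V → F :=
  Sym2.lift ⟨fun x y => u x + u y, fun _ _ => add_comm _ _⟩

/-- `G` is edge-square over `F`: every edge is exactly the support of a square `u²`. -/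
def EdgeSquare {V : Type*} (F : Type*) [Field F] (G : SimpleGraph V) : Prop :=
  ∀ e ∈ G.edgeSet, ∃ u : V → F,
    {f : Sym2 V | f ∈ G.edgeSet ∧ edgeVal u f ≠ 0} = {e}

/-- Every pair of distinct edges of `G` is the support of a square `u²`. -/
def PairSquare {V : Type*} (F : Type*) [Field F] (G : SimpleGraph V) : Prop :=
  ∀ e ∈ G.edgeSet, ∀ f ∈ G.edgeSet, e ≠ f → ∃ u : V → F,
    {g : Sym2 V | g ∈ G.edgeSet ∧ edgeVal u g ≠ 0} = {e, f}

namespace PaddleAux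

open SimpleGraph

variable {V F : Type*} [Field F] {G : SimpleGraph V}

lemma edgeVal_mk (u : V → F) (a b : V) : edgeVal u s(a, b) = u a + u b := rfl

/-- alternating sum of a list -/
def altL : List F → F
  | [] => 0
  | a :: l => a - altL l

/-- alternating sum of edge values along a walk -/
def altSum (u : V → F) {a b : V} (w : G.Walk a b) : F :=
  altL (w.edges.map (edgeVal u))

@[simp] lemma altSum_nil (u : V → F) {a : V} : altSum u (SimpleGraph.Walk.nil : G.Walk a a) = 0 := rfl

lemma altSum_cons (u : V → F) {a x b : V} (h : G.Adj a x) (p : G.Walk x b) :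
    altSum u (SimpleGraph.Walk.cons h p) = edgeVal u s(a, x) - altSum u p := rfl

lemma altSum_eq (u : V → F) {a b : V} (w : G.Walk a b) :
    altSum u w = u a - (-1 : F) ^ w.length * u b := by
  induction w with
  | nil => simp
  | cons h p ih =>
      rw [altSum_cons, ih, edgeVal_mk]
      rw [SimpleGraph.Walk.length_cons, pow_succ]
      ring

lemma altSum_zero (u : V → F) {a b : V} (w : G.Walk a b)
    (h : ∀ g ∈ w.edges, edgeVal u g = 0) : altSum u w = 0 := by
  induction w with
  | nil => simp
  | cons hadj p ih =>
      rw [altSum_cons, h _ (by simp), ih fun g hg => h g (by simp [hg])]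
      ring

lemma altSum_single [DecidableEq (Sym2 V)] (u : V → F) {a b : V} (w : G.Walk a b) {f : Sym2 V}
    (hc : w.edges.count f = 1) (h0 : ∀ g ∈ w.edges, g ≠ f → edgeVal u g = 0) :
    altSum u w = edgeVal u f ∨ altSum u w = -edgeVal u f := by
  induction w with
  | nil => simp at hc
  | @cons a x b hadj p ih =>
      rw [SimpleGraph.Walk.edges_cons, List.count_cons] at hc
      simp only [beq_iff_eq] at hc
      by_cases hgf : s(a, x) = f
      · rw [if_pos hgf] at hc
        have hfp : f ∉ p.edges := by
          intro hm
          have h' : 0 < p.edges.count f := List.count_pos_iff.2 hm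
          omega
        have : altSum u p = 0 := altSum_zero u p fun g hg => by
          refine h0 g (by simp [hg]) ?_
          rintro rfl; exact hfp hg
        rw [altSum_cons, hgf, this]
        left; ring
      · rw [if_neg hgf, add_zero] at hc
        have h1 : edgeVal u s(a, x) = 0 := h0 _ (by simp) hgf
        rcases ih hc (fun g hg hne => h0 g (by simp [hg]) hne) with h | h <;>
          rw [altSum_cons, h1, h] <;> [right; left] <;> ring

/-- The key contradiction lemma: an even closed walk containing some edge exactly once,
together with an edge of `G` outside the walk, contradicts `PairSquare`. -/
lemma key (hps : PairSquare F G) [DecidableEq (Sym2 V)] {v : V} (W : G.Walk v v)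
    (hW : Even W.length) {e f : Sym2 V} (hfW : W.edges.count f = 1)
    (heW : e ∉ W.edges) (heE : e ∈ G.edgeSet) : False := by
  have hfmem : f ∈ W.edges := List.count_pos_iff.1 (by omega)
  have hfE : f ∈ G.edgeSet := W.edges_subset_edgeSet hfmem
  have hef : e ≠ f := by rintro rfl; exact heW hfmem
  obtain ⟨u, hu⟩ := hps e heE f hfE hef
  have hmem : ∀ g : Sym2 V, (g ∈ G.edgeSet ∧ edgeVal u g ≠ 0) ↔ (g = e ∨ g = f) := by
    intro g
    have := Set.ext_iff.1 hu g
    simpa using this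
  have hfne : edgeVal u f ≠ 0 := ((hmem f).2 (Or.inr rfl)).2
  have h0 : ∀ g ∈ W.edges, g ≠ f → edgeVal u g = 0 := by
    intro g hg hgf
    by_contra hne
    rcases ((hmem g).1 ⟨W.edges_subset_edgeSet hg, hne⟩) with rfl | rfl
    · exact heW hg
    · exact hgf rfl
  have h1 := altSum_single u W hfW h0
  have h2 : altSum u W = 0 := by
    rw [altSum_eq, hW.neg_one_pow]
    ring
  rcases h1 with h | h <;> rw [h2] at h
  · exact hfne h.symm
  · exact hfne (neg_eq_zero.1 h.symm)


open SimpleGraph Walk in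
lemma isCycle_reverse {v : V} {p : G.Walk v v} (h : p.IsCycle) : p.reverse.IsCycle := by
  have hlen : 3 ≤ p.length := h.three_le_length
  rw [Walk.isCycle_def] at h ⊢
  obtain ⟨ht, hne, hnd⟩ := h
  refine ⟨Walk.IsTrail.reverse p ht, ?_, ?_⟩
  · intro hn
    have hl : p.length = 0 := by simpa using congrArg Walk.length hn
    omega
  · rw [Walk.support_reverse, List.tail_reverse, List.nodup_reverse]
    obtain ⟨t, hse⟩ : ∃ t, p.support = v :: t := ⟨p.support.tail, p.support_eq_cons⟩
    have hnd' : t.Nodup := by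
      have h' : p.support.tail = t := by rw [hse]; rfl
      rwa [h'] at hnd
    have hgl := p.getLast_support
    have htne : t ≠ [] := by
      rintro rfl
      have h' := p.length_support
      rw [hse] at h'
      simp only [List.length_cons, List.length_nil] at h'
      omega
    have hglt : t.getLast htne = v := by
      have h1 : p.support.getLast? = some v := by
        rw [List.getLast?_eq_getLast_of_ne_nil (by simp), hgl]
      rw [hse] at h1
      obtain ⟨t0, ts, rfl⟩ := List.exists_cons_of_ne_nil htne
      rw [List.getLast?_cons_cons, List.getLast?_eq_getLast_of_ne_nil (List.cons_ne_nil _ _)] at h1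
      simpa using h1
    have hdl : t.dropLast ++ [v] = t := by
      rw [← hglt]
      exact List.dropLast_append_getLast htne
    have h2 : (t.dropLast ++ [v]).Nodup := by rwa [hdl]
    rw [List.nodup_append] at h2
    have hvnot : v ∉ t.dropLast := fun hv => by
      simpa using h2.2.2 _ hv
    rw [hse, List.dropLast_cons_of_ne_nil htne]
    exact List.nodup_cons.2 ⟨hvnot, h2.1⟩

lemma splitCycleAux {x y : V} (c : G.Walk x x) (hc : c.IsCycle) (he : s(x, y) ∈ c.edges) :
    ∃ (h : G.Adj x y) (t : G.Walk y x),
      (SimpleGraph.Walk.cons h t).IsCycle ∧ (SimpleGraph.Walk.cons h t).edges.Perm c.edges ∧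
      (SimpleGraph.Walk.cons h t).length = c.length := by
  cases c with
  | nil => simp at he
  | @cons _ b _ hadj q =>
    rw [SimpleGraph.Walk.edges_cons, List.mem_cons] at he
    rcases he with he | he
    · have hyb : y = b := by
        rcases Sym2.eq_iff.1 he with ⟨-, h⟩ | ⟨h1, -⟩
        · exact h
        · exact absurd h1 hadj.ne
      subst hyb
      exact ⟨hadj, q, hc, List.Perm.refl _, rfl⟩
    · have hqedne : q.edges ≠ [] := List.ne_nil_of_mem he
      have hqnil : ¬ q.reverse.Nil := by
        rw [SimpleGraph.Walk.not_nil_iff_lt_length, SimpleGraph.Walk.length_reverse]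
        have : q.edges.length = q.length := q.length_edges
        have := List.length_pos_iff.2 hqedne
        omega
      obtain ⟨b₂, h₂, r, hrev⟩ := SimpleGraph.Walk.not_nil_iff.1 hqnil
      have heq : s(x, y) ∈ q.reverse.edges := by
        rw [SimpleGraph.Walk.edges_reverse, List.mem_reverse]; exact he
      rw [hrev, SimpleGraph.Walk.edges_cons, List.mem_cons] at heq
      have hsupnodup : q.support.Nodup := by
        have h' := hc.support_nodup
        simpa [SimpleGraph.Walk.support_cons] using h'
      rcases heq with heq | heq
      · have hyb₂ : y = b₂ := by
          rcases Sym2.eq_iff.1 heq with ⟨-, h⟩ | ⟨h1, -⟩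
          · exact h
          · exact absurd h1 h₂.ne
        subst hyb₂
        refine ⟨h₂, r.append (SimpleGraph.Walk.cons hadj.symm SimpleGraph.Walk.nil), ?_, ?_, ?_⟩
        all_goals {
          have hceq : SimpleGraph.Walk.cons h₂
              (r.append (SimpleGraph.Walk.cons hadj.symm SimpleGraph.Walk.nil)) =
              (SimpleGraph.Walk.cons hadj q).reverse := by
            rw [SimpleGraph.Walk.reverse_cons, hrev, SimpleGraph.Walk.cons_append]
          rw [hceq]
          first
          | exact isCycle_reverse hc
          | (rw [SimpleGraph.Walk.edges_reverse]; exact List.reverse_perm _)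
          | exact SimpleGraph.Walk.length_reverse _
        }
      · exfalso
        have hxr : x ∈ r.support := SimpleGraph.Walk.fst_mem_support_of_mem_edges r heq
        have hnodup2 : (x :: r.support).Nodup := by
          rw [← SimpleGraph.Walk.support_cons h₂ r, ← hrev, SimpleGraph.Walk.support_reverse]
          exact List.nodup_reverse.2 hsupnodup
        exact (List.nodup_cons.1 hnodup2).1 hxr

lemma splitCycle [DecidableEq V] {v x y : V} (w : G.Walk v v) (hw : w.IsCycle) (he : s(x, y) ∈ w.edges) :
    ∃ (h : G.Adj x y) (t : G.Walk y x),
      (SimpleGraph.Walk.cons h t).IsCycle ∧ (SimpleGraph.Walk.cons h t).edges.Perm w.edges ∧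
      (SimpleGraph.Walk.cons h t).length = w.length := by
  have hx : x ∈ w.support := w.fst_mem_support_of_mem_edges he
  have hperm : (w.rotate x hx).edges.Perm w.edges := (w.rotate_edges x hx).perm
  obtain ⟨h, t, h1, h2, h3⟩ := splitCycleAux (w.rotate x hx) (hw.rotate hx) (hperm.mem_iff.2 he)
  refine ⟨h, t, h1, h2.trans hperm, ?_⟩
  rw [h3]
  have := hperm.length_eq
  rwa [SimpleGraph.Walk.length_edges, SimpleGraph.Walk.length_edges] at this


/-- If some edge is a square and every pair is a square, then every edge is a square. -/
lemma sq_spread (hps : PairSquare F G) {f : Sym2 V} (hf : f ∈ G.edgeSet)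
    (uf : V → F) (huf : {g : Sym2 V | g ∈ G.edgeSet ∧ edgeVal uf g ≠ 0} = {f}) :
    EdgeSquare F G := by
  have hufmem : ∀ g : Sym2 V, (g ∈ G.edgeSet ∧ edgeVal uf g ≠ 0) ↔ g = f := by
    intro g; have := Set.ext_iff.1 huf g; simpa using this
  intro e he
  by_cases hef : e = f
  · exact hef ▸ ⟨uf, huf⟩
  obtain ⟨u, hu⟩ := hps e he f hf hef
  have humem : ∀ g : Sym2 V, (g ∈ G.edgeSet ∧ edgeVal u g ≠ 0) ↔ (g = e ∨ g = f) := by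
    intro g; have := Set.ext_iff.1 hu g; simpa using this
  have hff : edgeVal uf f ≠ 0 := ((hufmem f).2 rfl).2
  set c : F := edgeVal u f / edgeVal uf f with hc
  refine ⟨fun w => u w - c * uf w, ?_⟩
  have hlin : ∀ g : Sym2 V, edgeVal (fun w => u w - c * uf w) g
      = edgeVal u g - c * edgeVal uf g := by
    intro g
    induction g using Sym2.ind with
    | _ a b => simp only [edgeVal_mk]; ring
  ext g
  simp only [Set.mem_setOf_eq, Set.mem_singleton_iff]
  constructor
  · rintro ⟨hg, hne⟩
    rw [hlin] at hne
    by_contra hge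
    by_cases hgf : g = f
    · subst hgf
      rw [hc, div_mul_cancel₀ _ hff, sub_self] at hne
      exact hne rfl
    · have h1 : edgeVal u g = 0 := by
        by_contra h'
        rcases (humem g).1 ⟨hg, h'⟩ with h | h
        · exact hge h
        · exact hgf h
      have h2 : edgeVal uf g = 0 := by
        by_contra h'
        exact hgf ((hufmem g).1 ⟨hg, h'⟩)
      rw [h1, h2] at hne
      simp at hne
  · intro hge
    rw [hge]
    refine ⟨he, ?_⟩
    rw [hlin]
    have h2 : edgeVal uf e = 0 := by
      by_contra h'
      exact hef ((hufmem e).1 ⟨he, h'⟩)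
    have h1 : edgeVal u e ≠ 0 := ((humem e).2 (Or.inl rfl)).2
    rw [h2]
    simpa using h1

lemma inner_share [DecidableEq (Sym2 V)] (hps : PairSquare F G) {x y : V} (hxy : G.Adj x y)
    (t₁ t₂ : G.Walk y x) (he₁ : s(x, y) ∉ t₁.edges) (he₂ : s(x, y) ∉ t₂.edges)
    (hn₁ : t₁.edges.Nodup) (hE₁ : Even t₁.length) (hE₂ : Even t₂.length)
    {f : Sym2 V} (hf₁ : f ∈ t₁.edges) (hf₂ : f ∉ t₂.edges) : False := by
  refine key hps (t₁.append t₂.reverse) ?_ (f := f) (e := s(x, y)) ?_ ?_ (G.mem_edgeSet.2 hxy)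
  · rw [SimpleGraph.Walk.length_append, SimpleGraph.Walk.length_reverse]
    exact hE₁.add hE₂
  · rw [SimpleGraph.Walk.edges_append, List.count_append, SimpleGraph.Walk.edges_reverse,
      List.count_reverse]
    rw [List.count_eq_one_of_mem hn₁ hf₁, List.count_eq_zero.2 hf₂]
  · rw [SimpleGraph.Walk.edges_append, List.mem_append, SimpleGraph.Walk.edges_reverse,
      List.mem_reverse]
    rintro (h | h)
    · exact he₁ h
    · exact he₂ h

/-- Two odd cycles sharing an edge have the same edge set. -/
lemma share [DecidableEq V] [DecidableEq (Sym2 V)] (hps : PairSquare F G) {v₁ v₂ : V}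
    {C : G.Walk v₁ v₁} {D : G.Walk v₂ v₂} (hC : C.IsCycle) (hD : D.IsCycle)
    (hoC : Odd C.length) (hoD : Odd D.length) {e : Sym2 V}
    (heC : e ∈ C.edges) (heD : e ∈ D.edges) : C.edges.toFinset = D.edges.toFinset := by
  by_contra hne
  obtain ⟨⟨x, y⟩, rfl⟩ := e.exists_rep
  obtain ⟨h₁, t₁, hcyc₁, hperm₁, hlen₁⟩ := splitCycle C hC heC
  obtain ⟨h₂, t₂, hcyc₂, hperm₂, hlen₂⟩ := splitCycle D hD heD
  have hnd₁ : (SimpleGraph.Walk.cons h₁ t₁).edges.Nodup := hcyc₁.isCircuit.isTrail.edges_nodup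
  have hnd₂ : (SimpleGraph.Walk.cons h₂ t₂).edges.Nodup := hcyc₂.isCircuit.isTrail.edges_nodup
  rw [SimpleGraph.Walk.edges_cons, List.nodup_cons] at hnd₁ hnd₂
  have hE₁ : Even t₁.length := by
    rw [SimpleGraph.Walk.length_cons] at hlen₁
    obtain ⟨k, hk⟩ := hoC
    exact ⟨k, by omega⟩
  have hE₂ : Even t₂.length := by
    rw [SimpleGraph.Walk.length_cons] at hlen₂
    obtain ⟨k, hk⟩ := hoD
    exact ⟨k, by omega⟩
  have hCf : C.edges.toFinset = insert s(x, y) t₁.edges.toFinset := by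
    ext a
    simp only [List.mem_toFinset, ← hperm₁.mem_iff, SimpleGraph.Walk.edges_cons, List.mem_cons,
      Finset.mem_insert]
  have hDf : D.edges.toFinset = insert s(x, y) t₂.edges.toFinset := by
    ext a
    simp only [List.mem_toFinset, ← hperm₂.mem_iff, SimpleGraph.Walk.edges_cons, List.mem_cons,
      Finset.mem_insert]
  have htne : t₁.edges.toFinset ≠ t₂.edges.toFinset := by
    intro h
    apply hne
    rw [hCf, hDf, h]
  have : ∃ f : Sym2 V, (f ∈ t₁.edges ∧ f ∉ t₂.edges) ∨ (f ∈ t₂.edges ∧ f ∉ t₁.edges) := by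
    by_contra hfe
    push_neg at hfe
    apply htne
    ext g
    simp only [List.mem_toFinset]
    exact ⟨fun hg => (hfe g).1 hg, fun hg => (hfe g).2 hg⟩
  obtain ⟨f, hf | hf⟩ := this
  · exact inner_share hps h₁ t₁ t₂ hnd₁.1 hnd₂.1 hnd₁.2 hE₁ hE₂ hf.1 hf.2
  · exact inner_share hps h₂ t₂ t₁ hnd₂.1 hnd₁.1 hnd₂.2 hE₂ hE₁ hf.1 hf.2

end PaddleAux

theorem pair_square_q_eq_p_add_one_is_doubly_odd_paddle
    {V F : Type*} [Fintype V] [DecidableEq V] [Field F] [CharZero F]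
    (G : SimpleGraph V) [DecidableRel G.Adj]
    (hconn : G.Connected)
    (hq : G.edgeFinset.card = Fintype.card V + 1)
    (hps : PairSquare F G) (hnes : ¬ EdgeSquare F G) :
    (∀ v : V, 2 ≤ G.degree v) ∧
      (∀ (v : V) (w : G.Walk v v), w.IsCycle → ¬ Even w.length) ∧
      (∃ (v₁ v₂ : V) (w₁ : G.Walk v₁ v₁) (w₂ : G.Walk v₂ v₂),
        w₁.IsCycle ∧ w₂.IsCycle ∧ Odd w₁.length ∧ Odd w₂.length ∧
        ∀ e, e ∈ w₁.edges → e ∉ w₂.edges) := by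
  have hp1 : 1 ≤ Fintype.card V := Fintype.card_pos_iff.2 hconn.nonempty
  have hp2 : 2 ≤ Fintype.card V := by
    by_contra h
    push_neg at h
    have hch : (Fintype.card V).choose 2 = 0 := Nat.choose_eq_zero_of_lt (by omega)
    have := G.card_edgeFinset_le_card_choose_two
    omega
  -- Part 1 : minimum degree 2
  have part1 : ∀ v : V, 2 ≤ G.degree v := by
    intro v
    by_contra hd
    push_neg at hd
    obtain ⟨w', hw'⟩ := Fintype.exists_ne_of_one_lt_card (by omega) v
    obtain ⟨wk⟩ := hconn.preconnected v w'
    have hadj1 : ∃ z, G.Adj v z := by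
      cases wk with
      | nil => exact absurd rfl hw'
      | cons h p => exact ⟨_, h⟩
    obtain ⟨z, hz⟩ := hadj1
    have hdeg1 : G.degree v = 1 := by
      have := (G.degree_pos_iff_exists_adj v).2 ⟨z, hz⟩
      omega
    obtain ⟨w₀, hw₀⟩ := Finset.card_eq_one.1 (hdeg1 : (G.neighborFinset v).card = 1)
    have hadj₀ : G.Adj v w₀ := by
      have : w₀ ∈ G.neighborFinset v := by rw [hw₀]; exact Finset.mem_singleton_self w₀
      rwa [SimpleGraph.mem_neighborFinset] at this
    have he : s(v, w₀) ∈ G.edgeSet := hadj₀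
    have huniq : ∀ g ∈ G.edgeSet, v ∈ g → g = s(v, w₀) := by
      intro g hg hvg
      obtain ⟨⟨a, b⟩, rfl⟩ := g.exists_rep
      rw [Sym2.mem_iff] at hvg
      have hgadj : G.Adj a b := hg
      rcases hvg with rfl | rfl
      · have hb : b ∈ G.neighborFinset v := by rw [SimpleGraph.mem_neighborFinset]; exact hgadj
        rw [hw₀, Finset.mem_singleton] at hb
        rw [hb]
      · have ha : a ∈ G.neighborFinset v := by rw [SimpleGraph.mem_neighborFinset]; exact hgadj.symm
        rw [hw₀, Finset.mem_singleton] at ha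
        rw [ha, Sym2.eq_swap]
    have hq2 : 1 < G.edgeFinset.card := by omega
    obtain ⟨f, hf, hfe⟩ := Finset.exists_mem_ne hq2 s(v, w₀)
    rw [SimpleGraph.mem_edgeFinset] at hf
    obtain ⟨u, hu⟩ := hps f hf s(v, w₀) he hfe
    have humem : ∀ g : Sym2 V, (g ∈ G.edgeSet ∧ edgeVal u g ≠ 0) ↔ (g = f ∨ g = s(v, w₀)) := by
      intro g; have := Set.ext_iff.1 hu g; simpa using this
    set u' := Function.update u v (-(u w₀)) with hu'def
    have hvne : w₀ ≠ v := hadj₀.ne'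
    have hval : ∀ g ∈ G.edgeSet, g ≠ s(v, w₀) → edgeVal u' g = edgeVal u g := by
      intro g hg hge
      obtain ⟨⟨a, b⟩, rfl⟩ := g.exists_rep
      have hva : a ≠ v := by
        rintro rfl
        exact hge (huniq _ hg (by rw [Sym2.mem_iff]; left; rfl))
      have hvb : b ≠ v := by
        rintro rfl
        exact hge (huniq _ hg (by rw [Sym2.mem_iff]; right; rfl))
      rw [PaddleAux.edgeVal_mk, PaddleAux.edgeVal_mk, hu'def,
        Function.update_of_ne hva, Function.update_of_ne hvb]
    have h0 : edgeVal u' s(v, w₀) = 0 := by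
      rw [PaddleAux.edgeVal_mk, hu'def, Function.update_self, Function.update_of_ne hvne]
      ring
    apply hnes
    refine PaddleAux.sq_spread hps hf u' ?_
    ext g
    simp only [Set.mem_setOf_eq, Set.mem_singleton_iff]
    constructor
    · rintro ⟨hg, hne0⟩
      have hgne : g ≠ s(v, w₀) := by
        rintro rfl
        exact hne0 h0
      rcases (humem g).1 ⟨hg, by rwa [hval g hg hgne] at hne0⟩ with h | h
      · exact h
      · exact absurd h hgne
    · intro hgf
      rw [hgf]
      refine ⟨hf, ?_⟩
      rw [hval f hf hfe]
      exact ((humem f).2 (Or.inl rfl)).2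
  -- Part 2 : no even cycles
  have part2 : ∀ (v : V) (w : G.Walk v v), w.IsCycle → ¬ Even w.length := by
    intro v w hw hev
    have hnd : w.edges.Nodup := hw.isCircuit.isTrail.edges_nodup
    have hlen3 := hw.three_le_length
    have hened : w.edges ≠ [] := by
      intro h
      have h' := w.length_edges
      rw [h] at h'
      simp at h'
      omega
    obtain ⟨f, hf⟩ := List.exists_mem_of_ne_nil _ hened
    have hcount : w.edges.count f = 1 := List.count_eq_one_of_mem hnd hf
    have hcard : w.edges.toFinset.card = w.length := by
      rw [List.toFinset_card_of_nodup hnd, w.length_edges]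
    have hsub : w.edges.toFinset ⊆ G.edgeFinset := by
      intro a ha
      rw [List.mem_toFinset] at ha
      exact SimpleGraph.mem_edgeFinset.2 (w.edges_subset_edgeSet ha)
    have hlt : w.edges.toFinset.card < G.edgeFinset.card := by
      rw [hcard, hq]
      have hsupnd := hw.support_nodup
      have hlc : w.length ≤ Fintype.card V := by
        have h1 : w.support.tail.length = w.length := by
          rw [List.length_tail, w.length_support]
          omega
        rw [← h1]
        exact hsupnd.length_le_card
      omega
    obtain ⟨e, he, hnotin⟩ := Finset.exists_of_ssubset
      (Finset.ssubset_iff_subset_ne.2 ⟨hsub, fun h => by rw [h] at hlt; omega⟩)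
    exact PaddleAux.key hps w hev hcount
      (fun hmem => hnotin (List.mem_toFinset.2 hmem)) (SimpleGraph.mem_edgeFinset.1 he)
  refine ⟨part1, part2, ?_⟩
  -- Part 3 : two edge-disjoint odd cycles
  have hnotree : ¬ G.IsAcyclic := by
    intro hac
    have htree : G.IsTree := ⟨hconn, hac⟩
    have := htree.card_edgeFinset
    omega
  obtain ⟨v₁, C₁, hC₁⟩ : ∃ (v : V) (c : G.Walk v v), c.IsCycle := by
    by_contra h
    push_neg at h
    exact hnotree fun v c hc => h v c hc
  by_contra hno
  push_neg at hno
  have hoddC₁ : Odd C₁.length := Nat.not_even_iff_odd.1 (part2 _ _ hC₁)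
  have hall : ∀ (v : V) (D : G.Walk v v), D.IsCycle → D.edges.toFinset = C₁.edges.toFinset := by
    intro v D hD
    have hoD : Odd D.length := Nat.not_even_iff_odd.1 (part2 _ _ hD)
    obtain ⟨e, he₁, he₂⟩ := hno v v₁ D C₁ hD hC₁ hoD hoddC₁
    exact PaddleAux.share hps hD hC₁ hoD hoddC₁ he₁ he₂
  have hne3 : C₁.edges ≠ [] := by
    intro h
    have h' := C₁.length_edges
    rw [h] at h'
    simp at h'
    have := hC₁.three_le_length
    omega
  obtain ⟨e₁, he₁⟩ := List.exists_mem_of_ne_nil _ hne3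
  obtain ⟨⟨x, y⟩, rfl⟩ := e₁.exists_rep
  obtain ⟨hxy, t, hcyc, hperm, hlen⟩ := PaddleAux.splitCycle C₁ hC₁ he₁
  have hte : s(x, y) ∉ t.edges := by
    have hnd : (SimpleGraph.Walk.cons hxy t).edges.Nodup := hcyc.isCircuit.isTrail.edges_nodup
    rw [SimpleGraph.Walk.edges_cons, List.nodup_cons] at hnd
    exact hnd.1
  set G' := G.deleteEdges {s(x, y)} with hG'def
  haveI hdr : DecidableRel G'.Adj := fun a b =>
    decidable_of_iff _ (SimpleGraph.deleteEdges_adj (s := {s(x, y)}) (G := G)).symm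
  have hreach_yx : G'.Reachable y x :=
    ⟨t.toDeleteEdges {s(x, y)} (fun g hg => by
      simp only [Set.mem_singleton_iff]
      rintro rfl
      exact hte hg)⟩
  have hreach : ∀ a b : V, G.Adj a b → G'.Reachable a b := by
    intro a b hab
    by_cases h : s(a, b) = s(x, y)
    · rcases Sym2.eq_iff.1 h with ⟨rfl, rfl⟩ | ⟨rfl, rfl⟩
      · exact hreach_yx.symm
      · exact hreach_yx
    · refine SimpleGraph.Adj.reachable ?_
      rw [hG'def, SimpleGraph.deleteEdges_adj]
      exact ⟨hab, by simpa using h⟩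
  have hpre' : G'.Preconnected := by
    intro a b
    obtain ⟨wk⟩ := hconn.preconnected a b
    induction wk with
    | nil => exact SimpleGraph.Reachable.refl _
    | cons h p ih => exact (hreach _ _ h).trans ih
  have hconn' : G'.Connected := by
    haveI := hconn.nonempty
    exact ⟨hpre'⟩
  have hacyc' : G'.IsAcyclic := by
    intro v c hc
    have hcG : ∀ g ∈ c.edges, g ∈ G.edgeSet := by
      intro g hg
      have h' := c.edges_subset_edgeSet hg
      rw [hG'def, SimpleGraph.edgeSet_deleteEdges] at h'
      exact h'.1
    have hcyc2 : (c.transfer G hcG).IsCycle := hc.transfer hcG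
    have heq := hall v (c.transfer G hcG) hcyc2
    have hxyin : s(x, y) ∈ (c.transfer G hcG).edges := by
      have : s(x, y) ∈ (c.transfer G hcG).edges.toFinset := by
        rw [heq]
        exact List.mem_toFinset.2 he₁
      exact List.mem_toFinset.1 this
    rw [SimpleGraph.Walk.edges_transfer] at hxyin
    have h' := c.edges_subset_edgeSet hxyin
    rw [hG'def, SimpleGraph.edgeSet_deleteEdges] at h'
    exact h'.2 rfl
  have htree' : G'.IsTree := ⟨hconn', hacyc'⟩
  have hcard' := htree'.card_edgeFinset
  have hef' : G'.edgeFinset = G.edgeFinset \ {s(x, y)} := by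
    ext g
    rw [SimpleGraph.mem_edgeFinset, Finset.mem_sdiff, SimpleGraph.mem_edgeFinset, hG'def,
      SimpleGraph.edgeSet_deleteEdges]
    simp
  have hcards : G'.edgeFinset.card = G.edgeFinset.card - 1 := by
    rw [hef', Finset.sdiff_singleton_eq_erase,
      Finset.card_erase_of_mem (SimpleGraph.mem_edgeFinset.2 (C₁.edges_subset_edgeSet he₁))]
  omega
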